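/- For real κ ≠ 0, the map x ↦ (1/κ)·arcsinh(κx) is a bijection from (ℝ, ⊕_κ) to (ℝ, +) satisfying {x ⊕_κ y} = {x} + {y}, i.e. it is a group isomorphism. -/

import Mathlib

noncomputable def ksum (κ x y : ℝ) : ℝ :=
  x * Real.sqrt (1 + κ^2 * y^2) + y * Real.sqrt (1 + κ^2 * x^2)

lemma arsinh_add (a b : ℝ) :
    Real.arsinh (a * Real.sqrt (1 + b^2) + b * Real.sqrt (1 + a^2))
      = Real.arsinh a + Real.arsinh b := by
  apply Real.sinh_injective
  rw [Real.sinh_arsinh, Real.sinh_add, Real.sinh_arsinh, Real.sinh_arsinh,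
    Real.cosh_arsinh, Real.cosh_arsinh]
  ring

theorem ksum_iso (κ : ℝ) (hκ : κ ≠ 0) :
    Function.Bijective (fun x : ℝ => (1/κ) * Real.arsinh (κ*x)) ∧
    (∀ x y : ℝ, (1/κ) * Real.arsinh (κ * ksum κ x y)
      = (1/κ) * Real.arsinh (κ*x) + (1/κ) * Real.arsinh (κ*y)) := by
  constructor
  · apply Function.bijective_iff_has_inverse.mpr
    refine ⟨fun x => (1/κ) * Real.sinh (κ*x), fun x => ?_, fun x => ?_⟩ <;>
      field_simp [Real.sinh_arsinh, Real.arsinh_sinh] <;> simp [Real.sinh_arsinh, Real.arsinh_sinh]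
  · intro x y
    have h : κ * ksum κ x y
        = (κ*x) * Real.sqrt (1 + (κ*y)^2) + (κ*y) * Real.sqrt (1 + (κ*x)^2) := by
      unfold ksum; ring_nf
    rw [h, arsinh_add, mul_add]
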